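/- Let m be a positive integer and let 𝒜 be a collection of subsets of {1,...,m}. Suppose that every maximal increasing chain of subsets ∅ = A₀ ⊆ A₁ ⊆ ... ⊆ A_m = {1,...,m} (with |A_i| = i) contains at most K members of 𝒜. Then |𝒜| ≤ K · binom(m, ⌊m/2⌋). -/
import Mathlib


open Finset

private lemma mySubtypeCongr_apply {α : Type*} {p q : α → Prop} [DecidablePred p]
    [DecidablePred q] (e : { x // p x } ≃ { x // q x }) (f : { x // ¬p x } ≃ { x // ¬q x })
    (a : α) : Equiv.subtypeCongr e f a = if h : p a then (e ⟨a, h⟩ : α) else (f ⟨a, h⟩ : α) := by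
  by_cases h : p a <;> simp [Equiv.subtypeCongr, h]

private lemma card_filter_lt (m i : ℕ) (h : i ≤ m) :
    (Finset.univ.filter (fun j : Fin m => (j : ℕ) < i)).card = i := by
  have : (Finset.univ.filter (fun j : Fin m => (j : ℕ) < i))
      = (Finset.univ : Finset (Fin i)).map (Fin.castLEEmb h) := by
    ext j
    simp only [mem_filter, mem_univ, true_and, Finset.mem_map, Fin.castLEEmb]
    constructor
    · intro hj
      exact ⟨⟨(j : ℕ), hj⟩, by ext; simp⟩

    · rintro ⟨a, -, rfl⟩
      simpa using a.isLt
  rw [this, Finset.card_map, Finset.card_univ, Fintype.card_fin]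

/-- The number of permutations mapping the first `|A|` indices onto `A` is at least
`⌊m/2⌋! (m-⌊m/2⌋)!`. -/
private lemma aux_count (m : ℕ) (A : Finset (Fin m)) :
    (m / 2).factorial * (m - m / 2).factorial ≤
    (Finset.univ.filter (fun π : Equiv.Perm (Fin m) =>
      (Finset.univ.filter (fun j : Fin m => (j : ℕ) < A.card)).image π = A)).card := by
  classical
  set k := A.card with hk
  have hkm : k ≤ m := by simpa using Finset.card_le_univ A
  set T : Finset (Fin m) := Finset.univ.filter (fun j : Fin m => (j : ℕ) < k) with hT
  have hTcard : T.card = k := card_filter_lt m k hkm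
  -- the exact count lower bound k!(m-k)!
  have hstep : k.factorial * (m - k).factorial ≤
      (Finset.univ.filter (fun π : Equiv.Perm (Fin m) => T.image π = A)).card := by
    -- injection from pairs of equivs
    have hcompl : Fintype.card { x : Fin m // x ∉ T } = m - k := by
      have := Fintype.card_subtype_compl (fun x : Fin m => x ∈ T)
      simpa [Fintype.card_coe, hTcard] using this
    have hcomplA : Fintype.card { x : Fin m // x ∉ A } = m - k := by
      have := Fintype.card_subtype_compl (fun x : Fin m => x ∈ A)
      simpa [Fintype.card_coe, hk] using this
    have e0 : { x : Fin m // x ∈ T } ≃ { x : Fin m // x ∈ A } := by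
      apply Fintype.equivOfCardEq; simp [Fintype.card_coe, hTcard, hk]
    have f0 : { x : Fin m // x ∉ T } ≃ { x : Fin m // x ∉ A } :=
      Fintype.equivOfCardEq (by rw [hcompl, hcomplA])
    set Φ : ({ x : Fin m // x ∈ T } ≃ { x : Fin m // x ∈ A }) ×
        ({ x : Fin m // x ∉ T } ≃ { x : Fin m // x ∉ A }) →
        { π : Equiv.Perm (Fin m) // T.image π = A } := fun ef =>
      ⟨Equiv.subtypeCongr ef.1 ef.2, by
        ext x
        simp only [Finset.mem_image]
        constructor
        · rintro ⟨y, hy, rfl⟩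
          rw [mySubtypeCongr_apply, dif_pos hy]
          exact (ef.1 ⟨y, hy⟩).2
        · intro hx
          refine ⟨(ef.1.symm ⟨x, hx⟩ : Fin m), (ef.1.symm ⟨x, hx⟩).2, ?_⟩
          rw [mySubtypeCongr_apply, dif_pos (ef.1.symm ⟨x, hx⟩).2]
          simp⟩ with hΦ
    have hinj : Function.Injective Φ := by
      rintro ⟨e, f⟩ ⟨e', f'⟩ h
      have h' : Equiv.subtypeCongr e f = Equiv.subtypeCongr e' f' := congrArg Subtype.val h
      have he : e = e' := by
        apply Equiv.ext; intro t; apply Subtype.ext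
        have := Equiv.ext_iff.mp h' (t : Fin m)
        rw [mySubtypeCongr_apply, mySubtypeCongr_apply, dif_pos t.2, dif_pos t.2] at this
        simpa using this
      have hf : f = f' := by
        apply Equiv.ext; intro t; apply Subtype.ext
        have := Equiv.ext_iff.mp h' (t : Fin m)
        rw [mySubtypeCongr_apply, mySubtypeCongr_apply, dif_neg t.2, dif_neg t.2] at this
        simpa using this
      simp [he, hf]
    have := Fintype.card_le_of_injective Φ hinj
    rwa [Fintype.card_prod, Fintype.card_equiv e0, Fintype.card_equiv f0,
      Fintype.card_coe, hTcard, hcompl, Fintype.card_subtype] at this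
  refine le_trans ?_ hstep
  -- factorial inequality
  have h1 : Nat.choose m k ≤ Nat.choose m (m / 2) := Nat.choose_le_middle k m
  have h2 : Nat.choose m (m / 2) * ((m / 2).factorial * (m - m / 2).factorial) = m.factorial := by
    rw [← mul_assoc]; exact Nat.choose_mul_factorial_mul_factorial (Nat.div_le_self m 2)
  have h3 : Nat.choose m k * (k.factorial * (m - k).factorial) = m.factorial := by
    rw [← mul_assoc]; exact Nat.choose_mul_factorial_mul_factorial hkm
  have hpos : 0 < Nat.choose m (m / 2) := Nat.choose_pos (Nat.div_le_self m 2)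
  have : Nat.choose m (m / 2) * ((m / 2).factorial * (m - m / 2).factorial) ≤
      Nat.choose m (m / 2) * (k.factorial * (m - k).factorial) := by
    rw [h2, ← h3]
    exact Nat.mul_le_mul_right _ h1
  exact Nat.le_of_mul_le_mul_left this hpos

/-- If every maximal increasing chain of subsets of an `m`-element set contains at
most `K` members of `𝒜`, then `|𝒜| ≤ K·binom(m, ⌊m/2⌋)`.  Chains are indexed by
permutations `π`, the `i`-th set of the chain being the image under `π` of the
first `i` indices. -/
theorem family_card_le_of_chain_bound (m K : ℕ) (𝒜 : Finset (Finset (Fin m)))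
    (hK : ∀ π : Equiv.Perm (Fin m),
      ((Finset.range (m + 1)).filter (fun i =>
        (Finset.univ.filter (fun j : Fin m => (j : ℕ) < i)).image π ∈ 𝒜)).card ≤ K) :
    𝒜.card ≤ K * Nat.choose m (m / 2) := by
  classical
  set c := (m / 2).factorial * (m - m / 2).factorial with hc
  have hc0 : 0 < c := Nat.mul_pos (Nat.factorial_pos _) (Nat.factorial_pos _)
  set img : Equiv.Perm (Fin m) → ℕ → Finset (Fin m) := fun π i =>
    (Finset.univ.filter (fun j : Fin m => (j : ℕ) < i)).image π with himg
  have himgcard : ∀ (π : Equiv.Perm (Fin m)) (i : ℕ), i ≤ m → (img π i).card = i := by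
    intro π i hi
    rw [himg]
    simp only
    rw [Finset.card_image_of_injective _ π.injective, card_filter_lt m i hi]
  -- upper bound on the double count
  have hS1 : ∑ π : Equiv.Perm (Fin m),
      ((Finset.range (m + 1)).filter (fun i => img π i ∈ 𝒜)).card ≤ K * m.factorial := by
    calc ∑ π : Equiv.Perm (Fin m),
        ((Finset.range (m + 1)).filter (fun i => img π i ∈ 𝒜)).card
        ≤ ∑ _π : Equiv.Perm (Fin m), K := Finset.sum_le_sum (fun π _ => hK π)
      _ = Fintype.card (Equiv.Perm (Fin m)) * K := by
          rw [Finset.sum_const, smul_eq_mul, Finset.card_univ]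
      _ = K * m.factorial := by rw [Fintype.card_perm, Fintype.card_fin, mul_comm]
  -- double counting
  have hS2 : ∑ A ∈ 𝒜, (Finset.univ.filter (fun π : Equiv.Perm (Fin m) =>
        img π A.card = A)).card
      = ∑ π : Equiv.Perm (Fin m),
        ((Finset.range (m + 1)).filter (fun i => img π i ∈ 𝒜)).card := by
    have step1 : ∀ π : Equiv.Perm (Fin m),
        ((Finset.range (m + 1)).filter (fun i => img π i ∈ 𝒜)).card
        = ∑ A ∈ 𝒜, if img π A.card = A then 1 else 0 := by
      intro π
      rw [Finset.card_filter]
      have : ∀ i ∈ Finset.range (m + 1),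
          (if img π i ∈ 𝒜 then (1 : ℕ) else 0)
          = ∑ A ∈ 𝒜, if img π i = A then 1 else 0 := by
        intro i _
        rw [Finset.sum_ite_eq 𝒜 (img π i) (fun _ => (1 : ℕ))]
      rw [Finset.sum_congr rfl this, Finset.sum_comm]
      refine Finset.sum_congr rfl fun A hA => ?_
      have hAm : A.card ≤ m := by simpa using Finset.card_le_univ A
      refine Finset.sum_eq_single A.card (fun i hi hne => ?_) (fun h => ?_)
      · rw [if_neg]
        intro hEq
        apply hne
        have : (img π i).card = A.card := by rw [hEq]
        rwa [himgcard π i (by simpa [Nat.lt_succ_iff] using Finset.mem_range.mp hi)] at this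
      · exact absurd (Finset.mem_range.mpr (Nat.lt_succ_of_le hAm)) h
    rw [Finset.sum_congr rfl (fun π _ => step1 π), Finset.sum_comm]
    refine Finset.sum_congr rfl fun A _ => ?_
    rw [Finset.card_filter]
  -- lower bound
  have hS3 : 𝒜.card * c ≤ ∑ A ∈ 𝒜, (Finset.univ.filter (fun π : Equiv.Perm (Fin m) =>
      img π A.card = A)).card := by
    calc 𝒜.card * c = ∑ _A ∈ 𝒜, c := by rw [Finset.sum_const, smul_eq_mul]
      _ ≤ _ := Finset.sum_le_sum fun A _ => aux_count m A
  have hfin : 𝒜.card * c ≤ K * Nat.choose m (m / 2) * c := by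
    have hm : m.factorial = Nat.choose m (m / 2) * c := by
      rw [hc, ← mul_assoc]
      exact (Nat.choose_mul_factorial_mul_factorial (Nat.div_le_self m 2)).symm
    calc 𝒜.card * c ≤ _ := hS3
      _ = _ := hS2
      _ ≤ K * m.factorial := hS1
      _ = K * Nat.choose m (m / 2) * c := by rw [hm, mul_assoc]
  exact Nat.le_of_mul_le_mul_right hfin hc0
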